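/- arXiv:1909.09658 — 2 statements merged into one kernel-verified Lean document; each statement's English description precedes it below -/
import Mathlib

section
/- Let P be a finite poset and let v₁, …, v_k be pairwise incomparable elements of P. Then for each 1 ≤ i ≤ k, the composition τ*_{v₁} ∘ τ*_{v₂} ∘ ⋯ ∘ τ*_{v_i} equals η_{{v₁,…,v_i}} ∘ T_{v₁} ∘ T_{v₂} ∘ ⋯ ∘ T_{v_i} ∘ η_{{v₁,…,v_i}}⁻¹, on all S-labelings for which both sides are defined (i.e., every element inverted in the computation is nonzero). -/
/-!
Noncommutative (skew field) antichain/order toggling and rowmotion on a finite poset `P`,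
with labels in a division ring `S` and a fixed central element `C`, following
Joseph–Roby, "Birational and noncommutative lifts of antichain toggling and rowmotion".
All maps are partial; definedness ("every element inverted in the computation is
nonzero") is recorded by explicit predicates.
-/

open Finset

attribute [local instance] Classical.propDecidable

variable {P : Type*} [Fintype P] [PartialOrder P] {S : Type*} [DivisionRing S]

/-- `c` is a saturated chain in `P`: consecutive entries are covers. -/
def SatChain {P : Type*} [PartialOrder P] {k : ℕ} (c : Fin (k + 1) → P) : Prop :=
  ∀ i : Fin k, c i.castSucc ⋖ c i.succ

/-- `c` is a maximal chain of `P`: a saturated chain from a minimal element to a maximal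
element of `P` (equivalently, the restriction to `P` of a maximal chain
`0̂ ⋖ y₁ ⋖ ⋯ ⋖ y_k ⋖ 1̂` of `P̂`). -/
def MaxChain {P : Type*} [PartialOrder P] {k : ℕ} (c : Fin (k + 1) → P) : Prop :=
  SatChain c ∧ IsMin (c 0) ∧ IsMax (c (Fin.last k))

/-- `∑_{u ∈ P̂, u ⋖ v} f(u)`, with the convention `f(0̂) = 1`. -/
noncomputable def lSum (f : P → S) (v : P) : S :=
  (if IsMin v then 1 else 0) + ∑ u ∈ univ.filter (fun u => u ⋖ v), f u

/-- `∑_{u ∈ P̂, u ⋗ v} f(u)⁻¹`, with the convention `f(1̂) = C`; its inverse is the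
parallel sum `⫲_{u ∈ P̂, u ⋗ v} f(u)` (where `x ⫲ y = (x⁻¹ + y⁻¹)⁻¹`). -/
noncomputable def uInvSum (C : S) (f : P → S) (v : P) : S :=
  (if IsMax v then C⁻¹ else 0) + ∑ u ∈ univ.filter (fun u => v ⋖ u), (f u)⁻¹

/-- The noncommutative order toggle `T_v`: it replaces the label at `v` by
`(∑_{u ∈ P̂, u ⋖ v} f(u)) · f(v)⁻¹ · (⫲_{u ∈ P̂, u ⋗ v} f(u))` and fixes all other
labels. -/
noncomputable def ncT (C : S) (v : P) (f : P → S) : P → S :=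
  fun x => if x = v then lSum f v * (f v)⁻¹ * (uInvSum C f v)⁻¹ else f x

/-- The noncommutative order elggot `E_v`: it replaces the label at `v` by
`(⫲_{u ∈ P̂, u ⋗ v} f(u)) · f(v)⁻¹ · (∑_{u ∈ P̂, u ⋖ v} f(u))` and fixes all other
labels. -/
noncomputable def ncE (C : S) (v : P) (f : P → S) : P → S :=
  fun x => if x = v then (uInvSum C f v)⁻¹ * (f v)⁻¹ * lSum f v else f x

/-- Definedness of one application of `T_v` or `E_v` to `f`: every element inverted in
the computation (the label `f(v)`, the labels `f(u)` of the upper covers `u` of `v` in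
`P̂`, and the sum of their inverses) is nonzero. -/
def ncODef (C : S) (v : P) (f : P → S) : Prop :=
  f v ≠ 0 ∧ (∀ u : P, v ⋖ u → f u ≠ 0) ∧ (IsMax v → C ≠ 0) ∧ uInvSum C f v ≠ 0

/-- The element `∑ g(y_{c-1})⋯g(y₁) · g(y_k)⋯g(y_c)` inverted by the noncommutative
antichain toggle `τ_v`, summed over all maximal chains `0̂ ⋖ y₁ ⋖ ⋯ ⋖ y_k ⋖ 1̂` of `P̂`
with `y_c = v` (indices decrease by 1 within each factor). -/
noncomputable def tauDenom (g : P → S) (v : P) : S :=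
  ∑ k ∈ range (Fintype.card P),
    ∑ c ∈ univ.filter (fun c : Fin (k + 1) → P => MaxChain c),
      ∑ j ∈ univ.filter (fun j : Fin (k + 1) => c j = v),
        (((List.ofFn (g ∘ c)).take j.1).reverse).prod *
          (((List.ofFn (g ∘ c)).drop j.1).reverse).prod

/-- The element `∑ g(y_c)⋯g(y₁) · g(y_k)⋯g(y_{c+1})` inverted by the noncommutative
antichain elggot `ε_v`, summed over all maximal chains `0̂ ⋖ y₁ ⋖ ⋯ ⋖ y_k ⋖ 1̂` of `P̂`
with `y_c = v`. -/
noncomputable def epsDenom (g : P → S) (v : P) : S :=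
  ∑ k ∈ range (Fintype.card P),
    ∑ c ∈ univ.filter (fun c : Fin (k + 1) → P => MaxChain c),
      ∑ j ∈ univ.filter (fun j : Fin (k + 1) => c j = v),
        (((List.ofFn (g ∘ c)).take (j.1 + 1)).reverse).prod *
          (((List.ofFn (g ∘ c)).drop (j.1 + 1)).reverse).prod

/-- The noncommutative antichain toggle `τ_v`: it replaces the label at `v` by
`C · (∑ g(y_{c-1})⋯g(y₁) · g(y_k)⋯g(y_c))⁻¹` and fixes all other labels. -/
noncomputable def ncTau (C : S) (v : P) (g : P → S) : P → S :=
  fun x => if x = v then C * (tauDenom g v)⁻¹ else g x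

/-- The noncommutative antichain elggot `ε_v`: it replaces the label at `v` by
`C · (∑ g(y_c)⋯g(y₁) · g(y_k)⋯g(y_{c+1}))⁻¹` and fixes all other labels. -/
noncomputable def ncEps (C : S) (v : P) (g : P → S) : P → S :=
  fun x => if x = v then C * (epsDenom g v)⁻¹ else g x

/-- The noncommutative complement `Θ`: `(Θf)(x) = C · f(x)⁻¹`. -/
noncomputable def ncTheta (C : S) (f : P → S) : P → S := fun x => C * (f x)⁻¹

/-- The noncommutative down transfer `∇`:
`(∇f)(x) = f(x) · (∑_{y ∈ P̂, y ⋖ x} f(y))⁻¹` with `f(0̂) = 1`. -/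
noncomputable def ncNabla (f : P → S) : P → S := fun x => f x * (lSum f x)⁻¹

/-- The noncommutative inverse up transfer `Δ⁻¹`:
`(Δ⁻¹f)(x) = ∑ f(y_k)⋯f(y₂)f(y₁)` over all saturated chains
`x = y₁ ⋖ y₂ ⋖ ⋯ ⋖ y_k ⋖ 1̂` in `P̂`. -/
noncomputable def ncDeltaInv (f : P → S) : P → S := fun x =>
  ∑ k ∈ range (Fintype.card P),
    ∑ c ∈ univ.filter (fun c : Fin (k + 1) → P =>
        SatChain c ∧ c 0 = x ∧ IsMax (c (Fin.last k))),
      ((List.ofFn (f ∘ c)).reverse).prod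

/-- The noncommutative inverse down transfer `∇⁻¹`:
`(∇⁻¹f)(x) = ∑ f(y_k)⋯f(y₂)f(y₁)` over all saturated chains
`0̂ ⋖ y₁ ⋖ y₂ ⋖ ⋯ ⋖ y_k = x` in `P̂`. -/
noncomputable def ncNablaInv (f : P → S) : P → S := fun x =>
  ∑ k ∈ range (Fintype.card P),
    ∑ c ∈ univ.filter (fun c : Fin (k + 1) → P =>
        SatChain c ∧ IsMin (c 0) ∧ c (Fin.last k) = x),
      ((List.ofFn (f ∘ c)).reverse).prod

/-- `l` is a linear extension of `P`: it lists every element of `P` exactly once, and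
`l[i] < l[j]` in `P` implies `i < j`. -/
def IsLinearExtension {P : Type*} [PartialOrder P] (l : List P) : Prop :=
  l.Nodup ∧ (∀ x : P, x ∈ l) ∧
    ∀ (i j : ℕ) (hi : i < l.length) (hj : j < l.length), l[i]'hi < l[j]'hj → i < j

/-- `l` is a linear extension of the subposet `A` of `P`. -/
def IsLinearExtensionOn {P : Type*} [PartialOrder P] (A : Set P) (l : List P) : Prop :=
  l.Nodup ∧ (∀ x : P, x ∈ l ↔ x ∈ A) ∧
    ∀ (i j : ℕ) (hi : i < l.length) (hj : j < l.length), l[i]'hi < l[j]'hj → i < j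

/-- An order toggle (`T`) or order elggot (`E`) operation. -/
inductive OOp (P : Type*) where
  | T : P → OOp P
  | E : P → OOp P

/-- The poset element at which an operation acts. -/
def OOp.el {P : Type*} : OOp P → P
  | .T v => v
  | .E v => v

/-- Apply one order toggle/elggot operation. -/
noncomputable def applyOOp (C : S) : OOp P → (P → S) → (P → S)
  | .T v => ncT C v
  | .E v => ncE C v

/-- Apply a sequence of order toggle/elggot operations, first element of the list
applied first. -/
noncomputable def applyOOps (C : S) (l : List (OOp P)) (f : P → S) : P → S :=
  l.foldl (fun h o => applyOOp C o h) f

/-- Stepwise definedness of applying a sequence of order toggle/elggot operations: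
every element inverted in the computation is nonzero. -/
def OOpsDef (C : S) : List (OOp P) → (P → S) → Prop
  | [], _ => True
  | o :: l, f => ncODef C o.el f ∧ OOpsDef C l (applyOOp C o f)

/-- The sequence of operations realizing `τ_v* = η_v ∘ T_v ∘ η_v⁻¹`, listed in order of
application: first `η_v⁻¹ = E_{x_k} ∘ ⋯ ∘ E_{x₁}` (so `E_{x₁}` first), then `T_v`, then
`η_v = T_{x₁} ∘ ⋯ ∘ T_{x_k}` (so `T_{x_k}` first), where `le = (x₁,…,x_k)` is a linear
extension of `{x ∈ P : x < v}`. -/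
def tauStarOps {P : Type*} (v : P) (le : List P) : List (OOp P) :=
  le.map OOp.E ++ [OOp.T v] ++ (le.reverse).map OOp.T

/-- The sequence of operations realizing `ε_v* = η_v ∘ E_v ∘ η_v⁻¹`, listed in order of
application. -/
def epsStarOps {P : Type*} (v : P) (le : List P) : List (OOp P) :=
  le.map OOp.E ++ [OOp.E v] ++ (le.reverse).map OOp.T

section Aux

/-- Two elements commute for toggling purposes: distinct and no cover relation. -/
def TComm {P : Type*} [PartialOrder P] (a b : P) : Prop :=
  a ≠ b ∧ ¬ a ⋖ b ∧ ¬ b ⋖ a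

lemma TComm.symm' {P : Type*} [PartialOrder P] {a b : P} (h : TComm a b) : TComm b a :=
  ⟨h.1.symm, h.2.2, h.2.1⟩

lemma tcomm_of_incomp {P : Type*} [PartialOrder P] {a b : P}
    (h : ¬ a ≤ b) (h' : ¬ b ≤ a) : TComm a b :=
  ⟨fun e => h (e ▸ le_refl a), fun hc => h hc.le, fun hc => h' hc.le⟩

lemma ncT_apply (C : S) (v : P) (f : P → S) :
    ncT C v f v = lSum f v * (f v)⁻¹ * (uInvSum C f v)⁻¹ := by simp [ncT]

lemma ncE_apply (C : S) (v : P) (f : P → S) :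
    ncE C v f v = (uInvSum C f v)⁻¹ * (f v)⁻¹ * lSum f v := by simp [ncE]

lemma ncT_ne (C : S) (v : P) (f : P → S) {x : P} (h : x ≠ v) : ncT C v f x = f x := by
  simp [ncT, h]

lemma ncE_ne (C : S) (v : P) (f : P → S) {x : P} (h : x ≠ v) : ncE C v f x = f x := by
  simp [ncE, h]

lemma lSum_congr {f g : P → S} {v : P} (h : ∀ u, u ⋖ v → f u = g u) :
    lSum f v = lSum g v := by
  unfold lSum
  congr 1
  exact Finset.sum_congr rfl (fun u hu => h u (by simpa using hu))

lemma uInvSum_congr {C : S} {f g : P → S} {v : P} (h : ∀ u, v ⋖ u → f u = g u) :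
    uInvSum C f v = uInvSum C g v := by
  unfold uInvSum
  congr 1
  exact Finset.sum_congr rfl (fun u hu => by rw [h u (by simpa using hu)])

lemma applyOOp_ne {C : S} (o : OOp P) (f : P → S) {x : P} (h : x ≠ o.el) :
    applyOOp C o f x = f x := by
  cases o <;> simp_all [applyOOp, ncT, ncE, OOp.el]

lemma applyOOp_el_congr {C : S} (o : OOp P) {f g : P → S}
    (h0 : f o.el = g o.el) (hl : ∀ u, u ⋖ o.el → f u = g u)
    (hu : ∀ u, o.el ⋖ u → f u = g u) :
    applyOOp C o f o.el = applyOOp C o g o.el := by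
  cases o with
  | T v =>
      simp only [OOp.el] at h0 hl hu
      show ncT C v f v = ncT C v g v
      rw [ncT_apply, ncT_apply, lSum_congr hl, uInvSum_congr hu, h0]
  | E v =>
      simp only [OOp.el] at h0 hl hu
      show ncE C v f v = ncE C v g v
      rw [ncE_apply, ncE_apply, lSum_congr hl, uInvSum_congr hu, h0]

lemma ncODef_congr {C : S} {v : P} {f g : P → S}
    (h0 : f v = g v) (hu : ∀ u, v ⋖ u → f u = g u) :
    ncODef C v f ↔ ncODef C v g := by
  unfold ncODef
  rw [h0, uInvSum_congr hu]
  constructor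
  · rintro ⟨h1, h2, h3, h4⟩
    exact ⟨h1, fun u hc => (hu u hc) ▸ h2 u hc, h3, h4⟩
  · rintro ⟨h1, h2, h3, h4⟩
    exact ⟨h1, fun u hc => (hu u hc).symm ▸ h2 u hc, h3, h4⟩

/-- Toggles at `TComm` elements commute unconditionally. -/
lemma applyOOp_comm {C : S} {a b : OOp P} (h : TComm a.el b.el) (f : P → S) :
    applyOOp C a (applyOOp C b f) = applyOOp C b (applyOOp C a f) := by
  funext x
  by_cases hxa : x = a.el
  · subst hxa
    rw [applyOOp_ne b _ h.1, applyOOp_el_congr (C := C) a (applyOOp_ne b f h.1)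
      (fun u hu => applyOOp_ne b f (fun e => h.2.2 (e ▸ hu)))
      (fun u hu => applyOOp_ne b f (fun e => h.2.1 (e ▸ hu)))]
  · by_cases hxb : x = b.el
    · subst hxb
      rw [applyOOp_ne a _ (fun e => h.1 e.symm),
        applyOOp_el_congr (C := C) b (applyOOp_ne a f (fun e => h.1 e.symm)).symm
        (fun u hu => (applyOOp_ne a f (fun e => h.2.1 (e ▸ hu))).symm)
        (fun u hu => (applyOOp_ne a f (fun e => h.2.2 (e ▸ hu))).symm)]
    · rw [applyOOp_ne a _ hxa, applyOOp_ne b _ hxb, applyOOp_ne b _ hxb,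
        applyOOp_ne a _ hxa]

lemma ncODef_applyOOp {C : S} {v : P} (o : OOp P) (f : P → S)
    (hne : o.el ≠ v) (hnc : ¬ v ⋖ o.el) :
    ncODef C v (applyOOp C o f) ↔ ncODef C v f :=
  ncODef_congr (applyOOp_ne o f (fun e => hne e.symm))
    (fun u hu => applyOOp_ne o f (fun e => hnc (e ▸ hu)))

/-- Cancellation: `E_v (T_v f) = f` when both steps are defined. -/
lemma cancelTE_core {C : S} {v : P} {f : P → S}
    (h1 : ncODef C v f) (h2 : ncODef C v (ncT C v f)) :
    ncE C v (ncT C v f) = f := by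
  obtain ⟨hfv, -, -, hb⟩ := h1
  have hTne : ∀ x, x ≠ v → ncT C v f x = f x := fun x hx => ncT_ne C v f hx
  have hls : lSum (ncT C v f) v = lSum f v :=
    lSum_congr (fun u hu => hTne u (fun e => (lt_irrefl v (e ▸ hu).lt)))
  have hus : uInvSum C (ncT C v f) v = uInvSum C f v :=
    uInvSum_congr (fun u hu => hTne u (fun e => (lt_irrefl v (e ▸ hu).lt)))
  have ha : lSum f v ≠ 0 := by
    intro h0
    exact h2.1 (by rw [ncT_apply, h0, zero_mul, zero_mul])
  funext x
  by_cases hx : x = v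
  · rw [hx]
    rw [ncE_apply, hls, hus, ncT_apply, mul_inv_rev, mul_inv_rev, inv_inv, inv_inv]
    rw [← mul_assoc (uInvSum C f v)⁻¹ (uInvSum C f v), inv_mul_cancel₀ hb, one_mul,
      mul_assoc, inv_mul_cancel₀ ha, mul_one]
  · rw [ncE_ne C v _ hx, hTne x hx]

end Aux
section Rewriting

/-- One rewriting step on sequences of toggle operations: swapping adjacent commuting
operations, or cancelling an adjacent pair `T_v, E_v`. -/
inductive OStep {P : Type*} [PartialOrder P] : List (OOp P) → List (OOp P) → Prop
  | swap (c d : List (OOp P)) (a b : OOp P) (h : TComm a.el b.el) :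
      OStep (c ++ a :: b :: d) (c ++ b :: a :: d)
  | cancelTE (c d : List (OOp P)) (v : P) :
      OStep (c ++ OOp.T v :: OOp.E v :: d) (c ++ d)

/-- The rewriting relation generated by `OStep`. -/
def ORel {P : Type*} [PartialOrder P] : List (OOp P) → List (OOp P) → Prop :=
  Relation.ReflTransGen OStep

lemma OStep.context {l l' c d : List (OOp P)} (h : OStep l l') :
    OStep (c ++ l ++ d) (c ++ l' ++ d) := by
  cases h with
  | swap c' d' a b hab =>
      have := OStep.swap (c ++ c') (d' ++ d) a b hab
      simpa using this
  | cancelTE c' d' v =>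
      have := OStep.cancelTE (c ++ c') (d' ++ d) v
      simpa using this

lemma ORel.context {l l' : List (OOp P)} (c d : List (OOp P)) (h : ORel l l') :
    ORel (c ++ l ++ d) (c ++ l' ++ d) :=
  Relation.ReflTransGen.lift (p := OStep) (fun x => c ++ x ++ d)
    (fun _ _ (hs : OStep _ _) => hs.context) _ _ h

lemma ORel.trans' {l m n : List (OOp P)} (h : ORel l m) (h' : ORel m n) : ORel l n :=
  Relation.ReflTransGen.trans h h'

lemma applyOOps_append (C : S) (l₁ l₂ : List (OOp P)) (f : P → S) :
    applyOOps C (l₁ ++ l₂) f = applyOOps C l₂ (applyOOps C l₁ f) := by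
  simp [applyOOps, List.foldl_append]

lemma applyOOps_cons (C : S) (o : OOp P) (l : List (OOp P)) (f : P → S) :
    applyOOps C (o :: l) f = applyOOps C l (applyOOp C o f) := rfl

lemma OOpsDef_append (C : S) (l₁ l₂ : List (OOp P)) (f : P → S) :
    OOpsDef C (l₁ ++ l₂) f ↔ OOpsDef C l₁ f ∧ OOpsDef C l₂ (applyOOps C l₁ f) := by
  induction l₁ generalizing f with
  | nil => simp [OOpsDef, applyOOps]
  | cons o l₁ ih =>
      simp only [List.cons_append, OOpsDef, List.append_eq, ih (applyOOp C o f),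
        applyOOps_cons, and_assoc]

lemma OOpsDef_congr {C : S} {l : List (OOp P)} {f g : P → S} (h : f = g) :
    OOpsDef C l f ↔ OOpsDef C l g := by rw [h]

/-- Soundness of a single rewriting step: it preserves definedness and the result. -/
lemma ostep_sound {C : S} {l l' : List (OOp P)} (h : OStep l l') (f : P → S)
    (hd : OOpsDef C l f) :
    OOpsDef C l' f ∧ applyOOps C l f = applyOOps C l' f := by
  cases h with
  | swap c d a b hab =>
      rw [OOpsDef_append] at hd
      obtain ⟨hc, hrest⟩ := hd
      set g := applyOOps C c f with hg
      obtain ⟨ha', hb', hrest⟩ : ncODef C a.el g ∧ ncODef C b.el (applyOOp C a g) ∧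
          OOpsDef C d (applyOOp C b (applyOOp C a g)) := by
        exact ⟨hrest.1, hrest.2.1, hrest.2.2⟩
      have hb'' : ncODef C b.el g :=
        (ncODef_applyOOp a g hab.1 hab.2.2).1 hb'
      have ha'' : ncODef C a.el (applyOOp C b g) :=
        (ncODef_applyOOp b g (fun e => hab.1 e.symm) hab.2.1).2 ha'
      have happ : applyOOp C b (applyOOp C a g) = applyOOp C a (applyOOp C b g) :=
        applyOOp_comm hab.symm' g
      constructor
      · rw [OOpsDef_append]
        exact ⟨hc, hb'', ha'', by rw [← happ]; exact hrest⟩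
      · rw [applyOOps_append, applyOOps_append, ← hg]
        show applyOOps C (a :: b :: d) g = applyOOps C (b :: a :: d) g
        simp only [applyOOps_cons]
        rw [happ]
  | cancelTE c d v =>
      rw [OOpsDef_append] at hd
      obtain ⟨hc, hrest⟩ := hd
      set g := applyOOps C c f with hg
      obtain ⟨h1, h2, hrest⟩ : ncODef C (OOp.T v).el g ∧
          ncODef C (OOp.E v).el (applyOOp C (OOp.T v) g) ∧
          OOpsDef C d (applyOOp C (OOp.E v) (applyOOp C (OOp.T v) g)) :=
        ⟨hrest.1, hrest.2.1, hrest.2.2⟩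
      have hcan : applyOOp C (OOp.E v) (applyOOp C (OOp.T v) g) = g :=
        cancelTE_core h1 h2
      constructor
      · rw [OOpsDef_append]
        refine ⟨hc, ?_⟩
        rw [← hg, ← hcan]
        exact hrest
      · rw [applyOOps_append, applyOOps_append, ← hg]
        show applyOOps C (OOp.T v :: OOp.E v :: d) g = applyOOps C d g
        simp only [applyOOps_cons]
        rw [show applyOOp C (OOp.E v) (applyOOp C (OOp.T v) g) = g from hcan]

/-- Soundness of the rewriting relation. -/
lemma orel_sound {C : S} {l l' : List (OOp P)} (h : ORel l l') (f : P → S)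
    (hd : OOpsDef C l f) :
    OOpsDef C l' f ∧ applyOOps C l f = applyOOps C l' f := by
  induction h with
  | refl => exact ⟨hd, rfl⟩
  | tail hlm hstep ih =>
      obtain ⟨hdm, heq⟩ := ih
      obtain ⟨hd', heq'⟩ := ostep_sound hstep f hdm
      exact ⟨hd', heq.trans heq'⟩

end Rewriting
section LinExt

/-- Swapping adjacent incomparable elements of a list of poset elements. -/
inductive PStep {P : Type*} [PartialOrder P] : List P → List P → Prop
  | swap (c d : List P) (a b : P) (hne : a ≠ b) (h1 : ¬ a < b) (h2 : ¬ b < a) :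
      PStep (c ++ a :: b :: d) (c ++ b :: a :: d)

/-- The rewriting relation generated by `PStep`. -/
def PRel {P : Type*} [PartialOrder P] : List P → List P → Prop :=
  Relation.ReflTransGen PStep

omit [Fintype P] in
lemma PStep.context {l l' c d : List P} (h : PStep l l') :
    PStep (c ++ l ++ d) (c ++ l' ++ d) := by
  cases h with
  | swap c' d' a b hne h1 h2 =>
      have := PStep.swap (c ++ c') (d' ++ d) a b hne h1 h2
      simpa using this

omit [Fintype P] in
lemma PRel.context {l l' : List P} (c d : List P) (h : PRel l l') :
    PRel (c ++ l ++ d) (c ++ l' ++ d) :=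
  Relation.ReflTransGen.lift (p := PStep) (fun x => c ++ x ++ d)
    (fun _ _ (hs : PStep _ _) => hs.context) _ _ h

omit [Fintype P] in
lemma PStep.tcomm {a b : P} (hne : a ≠ b) (h1 : ¬ a < b) (h2 : ¬ b < a) : TComm a b :=
  ⟨hne, fun hc => h1 hc.lt, fun hc => h2 hc.lt⟩

omit [Fintype P] in
lemma PStep.mapE {l l' : List P} (h : PStep l l') :
    OStep (l.map (OOp.E (P := P))) (l'.map OOp.E) := by
  cases h with
  | swap c d a b hne h1 h2 =>
      have := OStep.swap (c.map (OOp.E (P := P))) (d.map OOp.E) (OOp.E a) (OOp.E b)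
        (PStep.tcomm hne h1 h2)
      simpa using this

omit [Fintype P] in
lemma PStep.revT {l l' : List P} (h : PStep l l') :
    OStep (l.reverse.map (OOp.T (P := P))) (l'.reverse.map OOp.T) := by
  cases h with
  | swap c d a b hne h1 h2 =>
      have := OStep.swap (d.reverse.map (OOp.T (P := P))) (c.reverse.map OOp.T)
        (OOp.T b) (OOp.T a) (PStep.tcomm (Ne.symm hne) h2 h1)
      simpa using this

omit [Fintype P] in
lemma PRel.mapE {l l' : List P} (h : PRel l l') :
    ORel (l.map (OOp.E (P := P))) (l'.map OOp.E) :=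
  Relation.ReflTransGen.lift (p := OStep) (List.map OOp.E)
    (fun _ _ (hs : PStep _ _) => hs.mapE) _ _ h

omit [Fintype P] in
lemma PRel.revT {l l' : List P} (h : PRel l l') :
    ORel (l.reverse.map (OOp.T (P := P))) (l'.reverse.map OOp.T) :=
  Relation.ReflTransGen.lift (p := OStep) (fun x : List P => x.reverse.map (OOp.T (P := P)))
    (fun _ _ (hs : PStep _ _) => hs.revT) _ _ h

/-- A convenient `Pairwise` reformulation of `IsLinearExtensionOn`. -/
def LinOn {P : Type*} [PartialOrder P] (A : Set P) (l : List P) : Prop :=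
  l.Nodup ∧ (∀ x, x ∈ l ↔ x ∈ A) ∧ l.Pairwise (fun a b => ¬ b < a)

omit [Fintype P] in
lemma isLinearExtensionOn_iff {A : Set P} {l : List P} :
    IsLinearExtensionOn A l ↔ LinOn A l := by
  unfold IsLinearExtensionOn LinOn
  refine and_congr_right fun _ => and_congr_right fun _ => ?_
  rw [List.pairwise_iff_getElem]
  constructor
  · intro H i j hi hj hij hlt
    exact absurd (H j i hj hi hlt) (by omega)
  · intro K i j hi hj hlt
    rcases lt_trichotomy i j with h | h | h
    · exact h
    · subst h; exact absurd hlt (lt_irrefl _)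
    · exact absurd hlt (K j i hj hi h)

/-- Every subset of a finite poset admits a linear extension. -/
lemma linOn_exists (A : Set P) : ∃ l : List P, LinOn A l := by
  have main : ∀ (n : ℕ) (s : Finset P), s.card ≤ n →
      ∃ l : List P, l.Nodup ∧ (∀ x, x ∈ l ↔ x ∈ s) ∧
        l.Pairwise (fun a b => ¬ b < a) := by
    intro n
    induction n with
    | zero =>
        intro s hs
        have : s = ∅ := Finset.card_eq_zero.1 (Nat.le_zero.1 hs)
        exact ⟨[], by simp [this]⟩
    | succ n ih =>
        intro s hs
        rcases s.eq_empty_or_nonempty with rfl | hne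
        · exact ⟨[], by simp⟩
        · obtain ⟨m, hm, hmin⟩ := s.exists_minimal hne
          obtain ⟨l', h1, h2, h3⟩ := ih (s.erase m) (by
            have := Finset.card_erase_of_mem hm
            omega)
          refine ⟨m :: l', ?_, ?_, ?_⟩
          · exact List.nodup_cons.2 ⟨fun hmem => by simp [h2 m] at hmem, h1⟩
          · intro x
            simp only [List.mem_cons, h2 x, Finset.mem_erase]
            constructor
            · rintro (rfl | ⟨-, hx⟩)
              · exact hm
              · exact hx
            · intro hx
              by_cases hxm : x = m
              · exact Or.inl hxm
              · exact Or.inr ⟨hxm, hx⟩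
          · exact List.pairwise_cons.2
              ⟨fun y hy hlt => not_le_of_gt hlt (hmin (Finset.mem_of_mem_erase ((h2 y).1 hy)) hlt.le), h3⟩
  obtain ⟨l, h1, h2, h3⟩ := main (Set.toFinite A).toFinset.card _ le_rfl
  exact ⟨l, h1, fun x => (h2 x).trans (Set.Finite.mem_toFinset _), h3⟩

omit [Fintype P] in
lemma prel_bubble (x : P) :
    ∀ (c d : List P), (∀ y ∈ c, y ≠ x ∧ ¬ y < x ∧ ¬ x < y) →
      PRel (c ++ x :: d) (x :: (c ++ d)) := by
  intro c
  induction c with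
  | nil => intro d _; exact Relation.ReflTransGen.refl
  | cons a c ih =>
      intro d h
      have hax := h a (List.mem_cons_self)
      have hrest : ∀ y ∈ c, y ≠ x ∧ ¬ y < x ∧ ¬ x < y := fun y hy =>
        h y (List.mem_cons_of_mem a hy)
      have step1 : PRel (a :: (c ++ x :: d)) (a :: x :: (c ++ d)) := by
        have := PRel.context [a] [] (ih d hrest)
        simpa using this
      have step2 : PStep ([] ++ a :: x :: (c ++ d)) ([] ++ x :: a :: (c ++ d)) :=
        PStep.swap [] (c ++ d) a x hax.1 (fun h' => hax.2.1 h') (fun h' => hax.2.2 h')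
      simpa [PRel] using step1.tail step2

omit [Fintype P] in
/-- Any two linear extensions of the same set differ by swaps of adjacent
incomparable elements. -/
lemma linOn_prel {A : Set P} {l l' : List P} (hl : LinOn A l) (hl' : LinOn A l') :
    PRel l l' := by
  induction l' generalizing A l with
  | nil =>
      have : l = [] := List.eq_nil_iff_forall_not_mem.2
        (fun x hx => by simpa using (hl'.2.1 x).2 ((hl.2.1 x).1 hx))
      rw [this]
      exact Relation.ReflTransGen.refl
  | cons x t' ih =>
      have hxA : x ∈ A := (hl'.2.1 x).1 (List.mem_cons_self)
      have hxl : x ∈ l := (hl.2.1 x).2 hxA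
      obtain ⟨c, d, rfl⟩ := List.append_of_mem hxl
      have hnodup := hl.1
      have hxc : x ∉ c := fun hc => (List.disjoint_of_nodup_append hnodup) hc
        (List.mem_cons_self)
      have hxd : x ∉ d := by
        have := (List.nodup_append.1 hnodup).2.1
        exact (List.nodup_cons.1 this).1
      have hxt' : x ∉ t' := (List.nodup_cons.1 hl'.1).1
      have hcross : ∀ y ∈ c, y ≠ x ∧ ¬ y < x ∧ ¬ x < y := by
        intro y hy
        have hyA : y ∈ A := (hl.2.1 y).1 (List.mem_append_left _ hy)
        have hyl' : y ∈ x :: t' := (hl'.2.1 y).2 hyA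
        refine ⟨fun e => hxc (e ▸ hy), ?_, ?_⟩
        · rcases List.mem_cons.1 hyl' with rfl | hyt'
          · exact lt_irrefl y
          · exact (List.pairwise_cons.1 hl'.2.2).1 y hyt'
        · have := (List.pairwise_append.1 hl.2.2).2.2
          exact this y hy x (List.mem_cons_self)
      have hbub : PRel (c ++ x :: d) (x :: (c ++ d)) := prel_bubble x c d hcross
      have hsub : (c ++ d).Sublist (c ++ x :: d) :=
        (List.sublist_cons_self x d).append_left c
      have hcd : LinOn (A \ {x}) (c ++ d) := by
        refine ⟨hnodup.sublist hsub, ?_, hl.2.2.sublist hsub⟩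
        intro y
        constructor
        · intro hy
          refine ⟨(hl.2.1 y).1 (hsub.mem hy), ?_⟩
          rintro rfl
          rcases List.mem_append.1 hy with h | h
          · exact hxc h
          · exact hxd h
        · rintro ⟨hyA, hyx⟩
          have : y ∈ c ++ x :: d := (hl.2.1 y).2 hyA
          rcases List.mem_append.1 this with h | h
          · exact List.mem_append_left _ h
          · rcases List.mem_cons.1 h with rfl | h
            · exact absurd rfl hyx
            · exact List.mem_append_right _ h
      have ht' : LinOn (A \ {x}) t' := by
        refine ⟨(List.nodup_cons.1 hl'.1).2, ?_, (List.pairwise_cons.1 hl'.2.2).2⟩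
        intro y
        constructor
        · intro hy
          exact ⟨(hl'.2.1 y).1 (List.mem_cons_of_mem x hy), fun e => hxt' (e ▸ hy)⟩
        · rintro ⟨hyA, hyx⟩
          rcases List.mem_cons.1 ((hl'.2.1 y).2 hyA) with rfl | h
          · exact absurd rfl hyx
          · exact h
      have htail : PRel (c ++ d) t' := ih hcd ht'
      have : PRel (x :: (c ++ d)) (x :: t') := by
        have := PRel.context [x] [] htail
        simpa using this
      exact hbub.trans this

end LinExt
section Blocks

omit [Fintype P] in
lemma orel_comm_cons (a : OOp P) :
    ∀ (l c d : List (OOp P)), (∀ b ∈ l, TComm a.el b.el) →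
      ORel (c ++ a :: (l ++ d)) (c ++ (l ++ a :: d)) := by
  intro l
  induction l with
  | nil => intro c d _; exact Relation.ReflTransGen.refl
  | cons b l ih =>
      intro c d h
      have step1 : OStep (c ++ a :: b :: (l ++ d)) (c ++ b :: a :: (l ++ d)) :=
        OStep.swap c (l ++ d) a b (h b (List.mem_cons_self))
      have step2 : ORel ((c ++ [b]) ++ a :: (l ++ d)) ((c ++ [b]) ++ (l ++ a :: d)) :=
        ih (c ++ [b]) d (fun b' hb' => h b' (List.mem_cons_of_mem b hb'))
      have step2' : ORel (c ++ b :: a :: (l ++ d)) (c ++ (b :: l ++ a :: d)) := by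
        simpa [List.append_assoc] using step2
      exact Relation.ReflTransGen.head step1 step2'

omit [Fintype P] in
lemma orel_comm_blocks :
    ∀ (l₁ l₂ c d : List (OOp P)), (∀ a ∈ l₁, ∀ b ∈ l₂, TComm a.el b.el) →
      ORel (c ++ (l₁ ++ (l₂ ++ d))) (c ++ (l₂ ++ (l₁ ++ d))) := by
  intro l₁
  induction l₁ with
  | nil => intro l₂ c d _; exact Relation.ReflTransGen.refl
  | cons a l₁ ih =>
      intro l₂ c d h
      have step1 : ORel ((c ++ [a]) ++ (l₁ ++ (l₂ ++ d))) ((c ++ [a]) ++ (l₂ ++ (l₁ ++ d))) :=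
        ih l₂ (c ++ [a]) d (fun x hx => h x (List.mem_cons_of_mem a hx))
      have step1' : ORel (c ++ (a :: l₁ ++ (l₂ ++ d))) (c ++ a :: (l₂ ++ (l₁ ++ d))) := by
        simpa [List.append_assoc] using step1
      have step2 : ORel (c ++ a :: (l₂ ++ (l₁ ++ d))) (c ++ (l₂ ++ a :: (l₁ ++ d))) :=
        orel_comm_cons a l₂ c (l₁ ++ d) (fun b hb => h a (List.mem_cons_self) b hb)
      have goal2 : ORel (c ++ (a :: l₁ ++ (l₂ ++ d))) (c ++ (l₂ ++ (a :: l₁ ++ d))) := by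
        simpa [List.append_assoc, ORel] using step1'.trans step2
      exact goal2

omit [Fintype P] in
lemma orel_cancel_block :
    ∀ (u : List P) (c d : List (OOp P)),
      ORel (c ++ (u.reverse.map OOp.T ++ (u.map OOp.E ++ d))) (c ++ d) := by
  intro u
  induction u with
  | nil => intro c d; exact Relation.ReflTransGen.refl
  | cons h u ih =>
      intro c d
      have step1 : OStep ((c ++ u.reverse.map OOp.T) ++ OOp.T h :: OOp.E h :: (u.map OOp.E ++ d))
          ((c ++ u.reverse.map OOp.T) ++ (u.map OOp.E ++ d)) :=
        OStep.cancelTE (c ++ u.reverse.map OOp.T) (u.map OOp.E ++ d) h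
      have step1' : OStep (c ++ ((h :: u).reverse.map OOp.T ++ ((h :: u).map OOp.E ++ d)))
          (c ++ (u.reverse.map OOp.T ++ (u.map OOp.E ++ d))) := by
        simpa [List.append_assoc] using step1
      exact Relation.ReflTransGen.head step1' (ih c d)

omit [Fintype P] in
lemma linOn_append {A B : Set P} {la lb : List P} (hA : LinOn A la) (hB : LinOn B lb)
    (hdisj : ∀ x, x ∈ A → x ∈ B → False)
    (hlt : ∀ a ∈ B, ∀ b ∈ A, ¬ a < b) : LinOn (A ∪ B) (la ++ lb) := by
  refine ⟨?_, ?_, ?_⟩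
  · rw [List.nodup_append]
    exact ⟨hA.1, hB.1, fun x hx y hy hxy => hdisj x ((hA.2.1 x).1 hx) ((hB.2.1 x).1 (by rw [hxy]; exact hy))⟩
  · intro x
    simp only [List.mem_append, hA.2.1 x, hB.2.1 x, Set.mem_union]
  · rw [List.pairwise_append]
    exact ⟨hA.2.2, hB.2.2, fun a ha b hb =>
      hlt b ((hB.2.1 b).1 hb) a ((hA.2.1 a).1 ha)⟩

omit [Fintype P] in
lemma linOn_congr {A B : Set P} {l : List P} (h : LinOn A l) (hAB : A = B) :
    LinOn B l := hAB ▸ h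

end Blocks
section Key

omit [Fintype P] in
lemma tcomm_F1 {v : P} {old : List P} {x y : P} (hx1 : x < v)
    (hx2 : ¬ ∃ w ∈ old, x < w) (hy1 : ∃ w ∈ old, y < w) (hy2 : ¬ y < v) :
    TComm x y := by
  obtain ⟨w0, hw0, hyw0⟩ := hy1
  refine ⟨?_, ?_, ?_⟩
  · rintro rfl; exact hx2 ⟨w0, hw0, hyw0⟩
  · intro hc; exact hx2 ⟨w0, hw0, hc.lt.trans hyw0⟩
  · intro hc; exact hy2 (hc.lt.trans hx1)

omit [Fintype P] in
lemma tcomm_F2 {v : P} {old : List P} (hv : ∀ w ∈ old, ¬ v ≤ w) {y : P}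
    (hy1 : ∃ w ∈ old, y < w) (hy2 : ¬ y < v) : TComm v y := by
  obtain ⟨w0, hw0, hyw0⟩ := hy1
  refine ⟨?_, ?_, ?_⟩
  · rintro rfl; exact hv w0 hw0 hyw0.le
  · intro hc; exact hv w0 hw0 (hc.lt.trans hyw0).le
  · intro hc; exact hy2 hc.lt

omit [Fintype P] in
lemma tcomm_F3 {v : P} {old : List P} (hv : ∀ w ∈ old, ¬ w ≤ v) {x wj : P}
    (hwj : wj ∈ old) (hx1 : x < v) (hx2 : ¬ ∃ w ∈ old, x < w) : TComm x wj := by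
  refine ⟨?_, ?_, ?_⟩
  · rintro rfl; exact hv x hwj hx1.le
  · intro hc; exact hx2 ⟨wj, hwj, hc.lt⟩
  · intro hc; exact hv wj hwj (hc.lt.trans hx1).le

end Key
section KeyMain

lemma key_reduce (lev : P → List P) (hlev : ∀ w : P, LinOn {x : P | x < w} (lev w)) :
    ∀ rs : List P, rs.Pairwise (fun a b => ¬ a ≤ b ∧ ¬ b ≤ a) →
      ∃ s : List P, LinOn {x : P | ∃ w ∈ rs, x < w} s ∧
        ORel (rs.flatMap fun w => tauStarOps w (lev w))
          (s.map OOp.E ++ rs.map OOp.T ++ s.reverse.map OOp.T) := by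
  intro rs
  induction rs with
  | nil =>
      intro _
      refine ⟨[], ⟨List.nodup_nil, fun x => by simp, List.Pairwise.nil⟩, ?_⟩
      simp only [List.flatMap_nil, List.map_nil, List.reverse_nil, List.append_nil,
        List.nil_append]
      exact Relation.ReflTransGen.refl
  | cons v old ih =>
      intro hp
      have hv : ∀ w ∈ old, ¬ v ≤ w ∧ ¬ w ≤ v := (List.pairwise_cons.1 hp).1
      obtain ⟨so, hso, hrelo⟩ := ih (List.pairwise_cons.1 hp).2
      obtain ⟨u, hu⟩ := linOn_exists ({x : P | x < v} ∩ {x : P | ∃ w ∈ old, x < w})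
      obtain ⟨wl, hwl⟩ := linOn_exists ({x : P | x < v} \ {x : P | ∃ w ∈ old, x < w})
      obtain ⟨tl, htl⟩ := linOn_exists ({x : P | ∃ w ∈ old, x < w} \ {x : P | x < v})
      -- linear extensions of the unions
      have huw : LinOn {x : P | x < v} (u ++ wl) := by
        refine linOn_congr (linOn_append hu hwl (fun x h1 h2 => h2.2 h1.2) ?_)
          (Set.inter_union_diff _ _)
        rintro a ha b hb hab
        obtain ⟨w0, hw0, hb0⟩ := hb.2
        exact ha.2 ⟨w0, hw0, hab.trans hb0⟩
      have hut : LinOn {x : P | ∃ w ∈ old, x < w} (u ++ tl) := by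
        refine linOn_congr (linOn_append hu htl (fun x h1 h2 => h2.2 h1.1) ?_)
          (by rw [Set.inter_comm, Set.inter_union_diff])
        rintro a ha b hb hab
        exact ha.2 (hab.trans hb.1)
      have hwt : LinOn (({x : P | x < v} \ {x : P | ∃ w ∈ old, x < w}) ∪
          ({x : P | ∃ w ∈ old, x < w} \ {x : P | x < v})) (wl ++ tl) := by
        refine linOn_append hwl htl (fun x h1 h2 => h2.2 h1.1) ?_
        rintro a ha b hb hab
        exact ha.2 (hab.trans hb.1)
      have hs : LinOn ({x : P | x < v} ∪ {x : P | ∃ w ∈ old, x < w})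
          (u ++ (wl ++ tl)) := by
        refine linOn_congr (linOn_append hu hwt ?_ ?_) ?_
        · rintro x h1 (h2 | h2)
          · exact h2.2 h1.2
          · exact h2.2 h1.1
        · rintro a (ha | ha) b hb hab
          · obtain ⟨w0, hw0, hbw⟩ := hb.2
            exact ha.2 ⟨w0, hw0, hab.trans hbw⟩
          · exact ha.2 (hab.trans hb.1)
        · ext x
          simp only [Set.mem_union, Set.mem_inter_iff, Set.mem_diff, Set.mem_setOf_eq]
          tauto
      have hlinS : LinOn {x : P | ∃ w ∈ v :: old, x < w} (u ++ (wl ++ tl)) := by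
        refine linOn_congr hs ?_
        ext x
        simp only [Set.mem_union, Set.mem_setOf_eq, List.mem_cons]
        constructor
        · rintro (h | ⟨w0, hw0, hx⟩)
          · exact ⟨v, Or.inl rfl, h⟩
          · exact ⟨w0, Or.inr hw0, hx⟩
        · rintro ⟨w0, (rfl | hw0), hx⟩
          · exact Or.inl hx
          · exact Or.inr ⟨w0, hw0, hx⟩
      refine ⟨u ++ (wl ++ tl), hlinS, ?_⟩
      have p1 : PRel (lev v) (u ++ wl) := linOn_prel (hlev v) huw
      have p2 : PRel so (u ++ tl) := linOn_prel hso hut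
      have hwl' : ∀ x ∈ wl, x < v ∧ ¬ ∃ w ∈ old, x < w := fun x hx => (hwl.2.1 x).1 hx
      have htl' : ∀ y ∈ tl, (∃ w ∈ old, y < w) ∧ ¬ y < v := fun y hy => (htl.2.1 y).1 hy
      have h7 : ∀ a ∈ wl.reverse.map OOp.T, ∀ b ∈ tl.map OOp.E,
          TComm (OOp.el a) (OOp.el b) := by
        rintro a ha b hb
        obtain ⟨x, hx, rfl⟩ := List.mem_map.1 ha
        obtain ⟨y, hy, rfl⟩ := List.mem_map.1 hb
        have hx' := hwl' x (List.mem_reverse.1 hx)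
        have hy' := htl' y hy
        exact tcomm_F1 hx'.1 hx'.2 hy'.1 hy'.2
      have h8 : ∀ a ∈ [OOp.T v], ∀ b ∈ tl.map OOp.E, TComm (OOp.el a) (OOp.el b) := by
        rintro a ha b hb
        rw [List.mem_singleton] at ha
        subst ha
        obtain ⟨y, hy, rfl⟩ := List.mem_map.1 hb
        have hy' := htl' y hy
        exact tcomm_F2 (fun w hw => (hv w hw).1) hy'.1 hy'.2
      have h9 : ∀ a ∈ wl.reverse.map OOp.T, ∀ b ∈ old.map OOp.T,
          TComm (OOp.el a) (OOp.el b) := by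
        rintro a ha b hb
        obtain ⟨x, hx, rfl⟩ := List.mem_map.1 ha
        obtain ⟨wj, hwj, rfl⟩ := List.mem_map.1 hb
        have hx' := hwl' x (List.mem_reverse.1 hx)
        exact tcomm_F3 (fun w hw => (hv w hw).2) hwj hx'.1 hx'.2
      have h10 : ∀ a ∈ wl.reverse.map OOp.T, ∀ b ∈ tl.reverse.map OOp.T,
          TComm (OOp.el a) (OOp.el b) := by
        rintro a ha b hb
        obtain ⟨x, hx, rfl⟩ := List.mem_map.1 ha
        obtain ⟨y, hy, rfl⟩ := List.mem_map.1 hb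
        have hx' := hwl' x (List.mem_reverse.1 hx)
        have hy' := htl' y (List.mem_reverse.1 hy)
        exact tcomm_F1 hx'.1 hx'.2 hy'.1 hy'.2
      have r1 : ORel ((v :: old).flatMap fun w => tauStarOps w (lev w))
          (u.map OOp.E ++ wl.map OOp.E ++ [OOp.T v] ++ (lev v).reverse.map OOp.T ++
            old.flatMap fun w => tauStarOps w (lev w)) := by
        simpa only [tauStarOps, List.flatMap_cons, List.flatMap_nil, List.map_append, List.map_cons,
        List.map_nil, List.reverse_append, List.reverse_cons, List.reverse_nil,
        List.append_assoc, List.cons_append, List.nil_append, List.append_nil] using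
          ORel.context [] ([OOp.T v] ++ (lev v).reverse.map OOp.T ++
            old.flatMap fun w => tauStarOps w (lev w)) p1.mapE
      have r2 : ORel
          (u.map OOp.E ++ wl.map OOp.E ++ [OOp.T v] ++ (lev v).reverse.map OOp.T ++
            old.flatMap fun w => tauStarOps w (lev w))
          (u.map OOp.E ++ wl.map OOp.E ++ [OOp.T v] ++ wl.reverse.map OOp.T ++
            u.reverse.map OOp.T ++ old.flatMap fun w => tauStarOps w (lev w)) := by
        simpa only [tauStarOps, List.flatMap_cons, List.flatMap_nil, List.map_append, List.map_cons,
        List.map_nil, List.reverse_append, List.reverse_cons, List.reverse_nil,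
        List.append_assoc, List.cons_append, List.nil_append, List.append_nil] using
          ORel.context (u.map OOp.E ++ wl.map OOp.E ++ [OOp.T v])
            (old.flatMap fun w => tauStarOps w (lev w)) p1.revT
      have r3 : ORel
          (u.map OOp.E ++ wl.map OOp.E ++ [OOp.T v] ++ wl.reverse.map OOp.T ++
            u.reverse.map OOp.T ++ old.flatMap fun w => tauStarOps w (lev w))
          (u.map OOp.E ++ wl.map OOp.E ++ [OOp.T v] ++ wl.reverse.map OOp.T ++
            u.reverse.map OOp.T ++ so.map OOp.E ++ old.map OOp.T ++
            so.reverse.map OOp.T) := by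
        simpa only [tauStarOps, List.flatMap_cons, List.flatMap_nil, List.map_append, List.map_cons,
        List.map_nil, List.reverse_append, List.reverse_cons, List.reverse_nil,
        List.append_assoc, List.cons_append, List.nil_append, List.append_nil] using
          ORel.context (u.map OOp.E ++ wl.map OOp.E ++ [OOp.T v] ++
            wl.reverse.map OOp.T ++ u.reverse.map OOp.T) [] hrelo
      have r4 : ORel
          (u.map OOp.E ++ wl.map OOp.E ++ [OOp.T v] ++ wl.reverse.map OOp.T ++
            u.reverse.map OOp.T ++ so.map OOp.E ++ old.map OOp.T ++
            so.reverse.map OOp.T)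
          (u.map OOp.E ++ wl.map OOp.E ++ [OOp.T v] ++ wl.reverse.map OOp.T ++
            u.reverse.map OOp.T ++ u.map OOp.E ++ tl.map OOp.E ++ old.map OOp.T ++
            so.reverse.map OOp.T) := by
        simpa only [tauStarOps, List.flatMap_cons, List.flatMap_nil, List.map_append, List.map_cons,
        List.map_nil, List.reverse_append, List.reverse_cons, List.reverse_nil,
        List.append_assoc, List.cons_append, List.nil_append, List.append_nil] using
          ORel.context (u.map OOp.E ++ wl.map OOp.E ++ [OOp.T v] ++
            wl.reverse.map OOp.T ++ u.reverse.map OOp.T)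
            (old.map OOp.T ++ so.reverse.map OOp.T) p2.mapE
      have r5 : ORel
          (u.map OOp.E ++ wl.map OOp.E ++ [OOp.T v] ++ wl.reverse.map OOp.T ++
            u.reverse.map OOp.T ++ u.map OOp.E ++ tl.map OOp.E ++ old.map OOp.T ++
            so.reverse.map OOp.T)
          (u.map OOp.E ++ wl.map OOp.E ++ [OOp.T v] ++ wl.reverse.map OOp.T ++
            u.reverse.map OOp.T ++ u.map OOp.E ++ tl.map OOp.E ++ old.map OOp.T ++
            tl.reverse.map OOp.T ++ u.reverse.map OOp.T) := by
        simpa only [tauStarOps, List.flatMap_cons, List.flatMap_nil, List.map_append, List.map_cons,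
        List.map_nil, List.reverse_append, List.reverse_cons, List.reverse_nil,
        List.append_assoc, List.cons_append, List.nil_append, List.append_nil] using
          ORel.context (u.map OOp.E ++ wl.map OOp.E ++ [OOp.T v] ++
            wl.reverse.map OOp.T ++ u.reverse.map OOp.T ++ u.map OOp.E ++
            tl.map OOp.E ++ old.map OOp.T) [] p2.revT
      have r6 : ORel
          (u.map OOp.E ++ wl.map OOp.E ++ [OOp.T v] ++ wl.reverse.map OOp.T ++
            u.reverse.map OOp.T ++ u.map OOp.E ++ tl.map OOp.E ++ old.map OOp.T ++
            tl.reverse.map OOp.T ++ u.reverse.map OOp.T)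
          (u.map OOp.E ++ wl.map OOp.E ++ [OOp.T v] ++ wl.reverse.map OOp.T ++
            tl.map OOp.E ++ old.map OOp.T ++ tl.reverse.map OOp.T ++
            u.reverse.map OOp.T) := by
        simpa only [tauStarOps, List.flatMap_cons, List.flatMap_nil, List.map_append, List.map_cons,
        List.map_nil, List.reverse_append, List.reverse_cons, List.reverse_nil,
        List.append_assoc, List.cons_append, List.nil_append, List.append_nil] using
          orel_cancel_block u (u.map OOp.E ++ wl.map OOp.E ++ [OOp.T v] ++
            wl.reverse.map OOp.T)
            (tl.map OOp.E ++ old.map OOp.T ++ tl.reverse.map OOp.T ++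
              u.reverse.map OOp.T)
      have r7 : ORel
          (u.map OOp.E ++ wl.map OOp.E ++ [OOp.T v] ++ wl.reverse.map OOp.T ++
            tl.map OOp.E ++ old.map OOp.T ++ tl.reverse.map OOp.T ++
            u.reverse.map OOp.T)
          (u.map OOp.E ++ wl.map OOp.E ++ [OOp.T v] ++ tl.map OOp.E ++
            wl.reverse.map OOp.T ++ old.map OOp.T ++ tl.reverse.map OOp.T ++
            u.reverse.map OOp.T) := by
        simpa only [tauStarOps, List.flatMap_cons, List.flatMap_nil, List.map_append, List.map_cons,
        List.map_nil, List.reverse_append, List.reverse_cons, List.reverse_nil,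
        List.append_assoc, List.cons_append, List.nil_append, List.append_nil] using
          orel_comm_blocks (wl.reverse.map OOp.T) (tl.map OOp.E)
            (u.map OOp.E ++ wl.map OOp.E ++ [OOp.T v])
            (old.map OOp.T ++ tl.reverse.map OOp.T ++ u.reverse.map OOp.T) h7
      have r8 : ORel
          (u.map OOp.E ++ wl.map OOp.E ++ [OOp.T v] ++ tl.map OOp.E ++
            wl.reverse.map OOp.T ++ old.map OOp.T ++ tl.reverse.map OOp.T ++
            u.reverse.map OOp.T)
          (u.map OOp.E ++ wl.map OOp.E ++ tl.map OOp.E ++ [OOp.T v] ++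
            wl.reverse.map OOp.T ++ old.map OOp.T ++ tl.reverse.map OOp.T ++
            u.reverse.map OOp.T) := by
        simpa only [tauStarOps, List.flatMap_cons, List.flatMap_nil, List.map_append, List.map_cons,
        List.map_nil, List.reverse_append, List.reverse_cons, List.reverse_nil,
        List.append_assoc, List.cons_append, List.nil_append, List.append_nil] using
          orel_comm_blocks [OOp.T v] (tl.map OOp.E)
            (u.map OOp.E ++ wl.map OOp.E)
            (wl.reverse.map OOp.T ++ old.map OOp.T ++ tl.reverse.map OOp.T ++
              u.reverse.map OOp.T) h8
      have r9 : ORel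
          (u.map OOp.E ++ wl.map OOp.E ++ tl.map OOp.E ++ [OOp.T v] ++
            wl.reverse.map OOp.T ++ old.map OOp.T ++ tl.reverse.map OOp.T ++
            u.reverse.map OOp.T)
          (u.map OOp.E ++ wl.map OOp.E ++ tl.map OOp.E ++ [OOp.T v] ++
            old.map OOp.T ++ wl.reverse.map OOp.T ++ tl.reverse.map OOp.T ++
            u.reverse.map OOp.T) := by
        simpa only [tauStarOps, List.flatMap_cons, List.flatMap_nil, List.map_append, List.map_cons,
        List.map_nil, List.reverse_append, List.reverse_cons, List.reverse_nil,
        List.append_assoc, List.cons_append, List.nil_append, List.append_nil] using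
          orel_comm_blocks (wl.reverse.map OOp.T) (old.map OOp.T)
            (u.map OOp.E ++ wl.map OOp.E ++ tl.map OOp.E ++ [OOp.T v])
            (tl.reverse.map OOp.T ++ u.reverse.map OOp.T) h9
      have r10 : ORel
          (u.map OOp.E ++ wl.map OOp.E ++ tl.map OOp.E ++ [OOp.T v] ++
            old.map OOp.T ++ wl.reverse.map OOp.T ++ tl.reverse.map OOp.T ++
            u.reverse.map OOp.T)
          (u.map OOp.E ++ wl.map OOp.E ++ tl.map OOp.E ++ [OOp.T v] ++
            old.map OOp.T ++ tl.reverse.map OOp.T ++ wl.reverse.map OOp.T ++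
            u.reverse.map OOp.T) := by
        simpa only [tauStarOps, List.flatMap_cons, List.flatMap_nil, List.map_append, List.map_cons,
        List.map_nil, List.reverse_append, List.reverse_cons, List.reverse_nil,
        List.append_assoc, List.cons_append, List.nil_append, List.append_nil] using
          orel_comm_blocks (wl.reverse.map OOp.T) (tl.reverse.map OOp.T)
            (u.map OOp.E ++ wl.map OOp.E ++ tl.map OOp.E ++ [OOp.T v] ++
              old.map OOp.T) (u.reverse.map OOp.T) h10
      have rall := r1.trans (r2.trans (r3.trans (r4.trans (r5.trans (r6.trans
        (r7.trans (r8.trans (r9.trans r10))))))))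
      simpa only [tauStarOps, List.flatMap_cons, List.flatMap_nil, List.map_append, List.map_cons,
        List.map_nil, List.reverse_append, List.reverse_cons, List.reverse_nil,
        List.append_assoc, List.cons_append, List.nil_append, List.append_nil, ORel] using rall

end KeyMain

/-- Let `v₁,…,v_k` be pairwise incomparable elements of `P` (listed in
`vl`) and `1 ≤ i ≤ k`.  Then
`τ*_{v₁} ∘ τ*_{v₂} ∘ ⋯ ∘ τ*_{v_i} = η_{{v₁,…,v_i}} ∘ T_{v₁} ∘ T_{v₂} ∘ ⋯ ∘ T_{v_i} ∘ η_{{v₁,…,v_i}}⁻¹`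
on all `S`-labelings for which both sides are defined.  Here `τ_w* = η_w ∘ T_w ∘ η_w⁻¹`
(realized by the operation sequence `tauStarOps w (lev w)` for a linear extension
`lev w` of `{x : x < w}`), and `η_{{v₁,…,v_i}} = T_{x₁} ∘ ⋯ ∘ T_{x_m}` for a linear
extension `leS = (x₁,…,x_m)` of `{x ∈ P : x < w for some w ∈ {v₁,…,v_i}}`, with inverse
`E_{x_m} ∘ ⋯ ∘ E_{x₁}`.  The left side applies `τ*_{v_i}` first; the right side applies
`η⁻¹` (i.e. `E_{x₁}` first), then `T_{v_i},…,T_{v₁}`, then `η` (i.e. `T_{x_m}` first). -/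
theorem tauStar_comp_eq_eta_T_etaInv (C : S) (hC : ∀ s : S, C * s = s * C)
    (vl : List P) (hvl : vl.Pairwise (fun a b => ¬ a ≤ b ∧ ¬ b ≤ a))
    (i : ℕ) (hi1 : 1 ≤ i) (hi2 : i ≤ vl.length)
    (lev : P → List P) (hlev : ∀ w : P, IsLinearExtensionOn {x : P | x < w} (lev w))
    (leS : List P)
    (hleS : IsLinearExtensionOn {x : P | ∃ w ∈ vl.take i, x < w} leS)
    (f : P → S)
    (hL : OOpsDef C (((vl.take i).reverse).flatMap (fun w => tauStarOps w (lev w))) f)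
    (hR : OOpsDef C
      (leS.map OOp.E ++ ((vl.take i).reverse).map OOp.T ++ (leS.reverse).map OOp.T) f) :
    applyOOps C (((vl.take i).reverse).flatMap (fun w => tauStarOps w (lev w))) f
      = applyOOps C
          (leS.map OOp.E ++ ((vl.take i).reverse).map OOp.T ++ (leS.reverse).map OOp.T)
          f := by
  set rs := (vl.take i).reverse with hrs
  have hpair : rs.Pairwise (fun a b => ¬ a ≤ b ∧ ¬ b ≤ a) := by
    rw [hrs, List.pairwise_reverse]
    exact (hvl.sublist (List.take_sublist i vl)).imp (fun h => ⟨h.2, h.1⟩)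
  have hlev' : ∀ w : P, LinOn {x : P | x < w} (lev w) :=
    fun w => isLinearExtensionOn_iff.1 (hlev w)
  obtain ⟨s, hsLin, hrel⟩ := key_reduce lev hlev' rs hpair
  have hleS' : LinOn {x : P | ∃ w ∈ rs, x < w} leS := by
    refine linOn_congr (isLinearExtensionOn_iff.1 hleS) ?_
    ext x
    simp only [Set.mem_setOf_eq, hrs, List.mem_reverse]
  have pS : PRel leS s := linOn_prel hleS' hsLin
  have q1 : ORel (leS.map OOp.E ++ rs.map OOp.T ++ leS.reverse.map OOp.T)
      (s.map OOp.E ++ rs.map OOp.T ++ leS.reverse.map OOp.T) := by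
    simpa only [List.append_assoc, List.nil_append] using
      ORel.context [] (rs.map OOp.T ++ leS.reverse.map OOp.T) pS.mapE
  have q2 : ORel (s.map OOp.E ++ rs.map OOp.T ++ leS.reverse.map OOp.T)
      (s.map OOp.E ++ rs.map OOp.T ++ s.reverse.map OOp.T) := by
    simpa only [List.append_assoc, List.append_nil] using
      ORel.context (s.map OOp.E ++ rs.map OOp.T) [] pS.revT
  obtain ⟨-, eL⟩ := orel_sound hrel f hL
  obtain ⟨-, eR⟩ := orel_sound (q1.trans q2) f hR
  exact eL.trans eR.symm
end

section
/- Let P be a finite poset and (x₁, x₂, …, xₙ) any linear extension of P. Then noncommutative antichain rowmotion NAR = τ_{xₙ} ∘ ⋯ ∘ τ_{x₂} ∘ τ_{x₁} equals the composition ∇ ∘ Θ ∘ Δ⁻¹ of the noncommutative transfer maps: NAR(g) = ∇(Θ(Δ⁻¹(g))) for every S-labeling g of P for which both sides are defined (i.e., every element inverted in the computation is nonzero). -/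
/-!
Noncommutative (skew field) antichain/order toggling and rowmotion on a finite poset `P`,
with labels in a division ring `S` and a fixed central element `C`, following
Joseph–Roby, "Birational and noncommutative lifts of antichain toggling and rowmotion".
All maps are partial; definedness ("every element inverted in the computation is
nonzero") is recorded by explicit predicates.
-/

open Finset

attribute [local instance] Classical.propDecidable
set_option linter.unusedSectionVars false
set_option maxHeartbeats 1000000

variable {P : Type*} [Fintype P] [PartialOrder P] {S : Type*} [DivisionRing S]

/-- Apply the noncommutative antichain toggles `τ` along a list, first element first;
for a linear extension `l = (x₁,…,xₙ)` of `P` this is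
`NAR = τ_{xₙ} ∘ ⋯ ∘ τ_{x₂} ∘ τ_{x₁}`, noncommutative antichain rowmotion. -/
noncomputable def applyNCTaus (C : S) (l : List P) (g : P → S) : P → S :=
  l.foldl (fun h v => ncTau C v h) g

/-- Stepwise definedness of applying the antichain toggles `τ` along a list. -/
def ncTausDef (C : S) : List P → (P → S) → Prop
  | [], _ => True
  | v :: l, g => tauDenom g v ≠ 0 ∧ ncTausDef C l (ncTau C v g)

namespace JR

/-- reversed product of labels along a list -/
noncomputable def rp (f : P → S) (L : List P) : S := ((L.map f).reverse).prod

noncomputable def listFinset (P : Type*) [Fintype P] [PartialOrder P] : Finset (List P) :=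
  (Finset.range (Fintype.card P + 1)).biUnion
    (fun n => (Finset.univ : Finset (Fin n → P)).image List.ofFn)

lemma mem_listFinset {L : List P} : L ∈ listFinset P ↔ L.length ≤ Fintype.card P := by
  simp only [listFinset, Finset.mem_biUnion, Finset.mem_range, Finset.mem_image,
    Finset.mem_univ, true_and, Nat.lt_succ_iff]
  constructor
  · rintro ⟨n, hn, c, rfl⟩; simpa using hn
  · intro hL; exact ⟨L.length, hL, L.get, List.ofFn_get L⟩

lemma pairwise_of_chain {L : List P} (h : List.Chain' (· ⋖ ·) L) :
    List.Pairwise (· < ·) L :=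
  (List.isChain_iff_pairwise).mp (h.imp fun _ _ hab => hab.lt)

lemma nodup_of_chain {L : List P} (h : List.Chain' (· ⋖ ·) L) : L.Nodup :=
  (pairwise_of_chain h).nodup

lemma mem_listFinset_of_chain {L : List P} (h : List.Chain' (· ⋖ ·) L) :
    L ∈ listFinset P :=
  mem_listFinset.mpr (nodup_of_chain h).length_le_card

lemma head_le_of_chain {L : List P} (h : List.Chain' (· ⋖ ·) L) {v x : P}
    (hv : L.head? = some v) (hx : x ∈ L) : v ≤ x := by
  have hp := pairwise_of_chain h
  cases L with
  | nil => simp at hx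
  | cons a t =>
    have ha : a = v := by simpa using hv
    subst ha
    rcases List.mem_cons.mp hx with rfl | hx
    · exact le_rfl
    · exact ((List.pairwise_cons.mp hp).1 x hx).le

lemma le_getLast_of_chain {L : List P} (h : List.Chain' (· ⋖ ·) L) {v x : P}
    (hv : L.getLast? = some v) (hx : x ∈ L) : x ≤ v := by
  have hp : List.Pairwise (fun a b => b < a) L.reverse :=
    List.pairwise_reverse.mpr (pairwise_of_chain h)
  have hv' : L.reverse.head? = some v := by rw [List.head?_reverse]; exact hv
  have hx' : x ∈ L.reverse := List.mem_reverse.mpr hx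
  revert hp hv' hx'
  cases L.reverse with
  | nil => simp
  | cons a t =>
    intro hp hv' hx'
    have ha : a = v := by simpa using hv'
    subst ha
    rcases List.mem_cons.mp hx' with rfl | hx'
    · exact le_rfl
    · exact ((List.pairwise_cons.mp hp).1 x hx').le

lemma rp_congr {f h : P → S} {L : List P} (hfh : ∀ x ∈ L, f x = h x) :
    rp f L = rp h L := by
  unfold rp; rw [List.map_congr_left hfh]

/-- generic conversion from Fin-indexed chain sums to list sums -/
lemma sum_fin_eq_sum_list (pred : List P → Prop) (w : List P → S) :
    (∑ k ∈ Finset.range (Fintype.card P),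
        ∑ c ∈ Finset.univ.filter (fun c : Fin (k + 1) → P => pred (List.ofFn c)),
          w (List.ofFn c))
      = ∑ L ∈ (listFinset P).filter (fun L => L ≠ [] ∧ pred L), w L := by
  have hdisj : (↑(Finset.range (Fintype.card P + 1)) : Set ℕ).PairwiseDisjoint
      (fun n => Finset.filter (fun L => L ≠ [] ∧ pred L)
        ((Finset.univ : Finset (Fin n → P)).image List.ofFn)) := by
    intro m _ n _ hmn
    refine Finset.disjoint_left.mpr fun L hm hn => hmn ?_
    simp only [Finset.mem_filter, Finset.mem_image, Finset.mem_univ, true_and] at hm hn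
    obtain ⟨⟨c, rfl⟩, -⟩ := hm
    obtain ⟨⟨c', hc'⟩, -⟩ := hn
    have := congrArg List.length hc'
    simpa using this.symm
  rw [listFinset, Finset.filter_biUnion, Finset.sum_biUnion hdisj,
    Finset.sum_range_succ']
  have h0 : ∑ L ∈ Finset.filter (fun L => L ≠ [] ∧ pred L)
      ((Finset.univ : Finset (Fin 0 → P)).image List.ofFn), w L = 0 := by
    apply Finset.sum_eq_zero
    intro L hL
    simp only [Finset.mem_filter, Finset.mem_image, Finset.mem_univ, true_and] at hL
    obtain ⟨⟨c, rfl⟩, hne, -⟩ := hL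
    simp at hne
  rw [h0, add_zero]
  refine Finset.sum_congr rfl fun k _ => ?_
  conv_rhs => rw [Finset.sum_filter,
    Finset.sum_image (fun x _ y _ h => List.ofFn_injective h)]
  conv_lhs => rw [Finset.sum_filter]
  refine Finset.sum_congr rfl fun c _ => ?_
  have hne : List.ofFn c ≠ [] := by
    intro h; have := congrArg List.length h; simp at this
  simp [hne]


section Bridges

lemma satChain_iff {k : ℕ} (c : Fin (k + 1) → P) :
    SatChain c ↔ List.Chain' (· ⋖ ·) (List.ofFn c) := by
  unfold List.Chain'; rw [List.isChain_iff_getElem]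
  simp only [List.length_ofFn, Nat.add_sub_cancel, List.get_eq_getElem, List.getElem_ofFn]
  constructor
  · intro h i hi
    have := h ⟨i, by omega⟩
    convert this using 2 <;> apply Fin.ext <;> simp
  · intro h i
    have := h i.1 (by omega)
    convert this using 2 <;> apply Fin.ext <;> simp

lemma head?_ofFn {k : ℕ} (c : Fin (k + 1) → P) :
    (List.ofFn c).head? = some (c 0) := by
  rw [List.ofFn_succ]; rfl

lemma getLast?_ofFn {k : ℕ} (c : Fin (k + 1) → P) :
    (List.ofFn c).getLast? = some (c (Fin.last k)) := by
  rw [List.getLast?_eq_getElem?]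
  have hlen : (List.ofFn c).length = k + 1 := List.length_ofFn (f := c)
  rw [hlen]
  rw [List.getElem?_eq_getElem (by simp)]
  simp only [List.getElem_ofFn]
  congr 1

end Bridges

section ListForms

/-- saturated chain from `v` to a maximal element -/
def IsUpChain (v : P) (L : List P) : Prop :=
  List.Chain' (· ⋖ ·) L ∧ L.head? = some v ∧ ∀ y, L.getLast? = some y → IsMax y

/-- saturated chain from a minimal element to `v` -/
def IsDownChain (v : P) (L : List P) : Prop :=
  List.Chain' (· ⋖ ·) L ∧ (∀ y, L.head? = some y → IsMin y) ∧ L.getLast? = some v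

/-- saturated chain from a minimal element ending just below `v` (possibly empty) -/
def IsBelowChain (v : P) (L : List P) : Prop :=
  List.Chain' (· ⋖ ·) L ∧ (∀ y, L.head? = some y → IsMin y) ∧
    ((L = [] ∧ IsMin v) ∨ (∃ u, L.getLast? = some u ∧ u ⋖ v))

/-- maximal chain as a list -/
def IsMaxChainL (L : List P) : Prop :=
  List.Chain' (· ⋖ ·) L ∧ (∀ y, L.head? = some y → IsMin y) ∧
    ∀ y, L.getLast? = some y → IsMax y

noncomputable def wtau (f : P → S) (v : P) (L : List P) : S :=
  ∑ j ∈ (Finset.range L.length).filter (fun j => L[j]? = some v),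
    rp f (L.take j) * rp f (L.drop j)

lemma ncDeltaInv_eq (f : P → S) (v : P) :
    ncDeltaInv f v
      = ∑ L ∈ (listFinset P).filter (fun L => L ≠ [] ∧ IsUpChain v L), rp f L := by
  rw [← sum_fin_eq_sum_list (IsUpChain v) (rp f)]
  unfold ncDeltaInv
  refine Finset.sum_congr rfl fun k _ => ?_
  refine Finset.sum_congr ?_ fun c _ => ?_
  · ext c
    simp only [Finset.mem_filter, Finset.mem_univ, true_and]
    unfold IsUpChain
    rw [← satChain_iff, head?_ofFn, getLast?_ofFn]
    constructor
    · rintro ⟨h1, rfl, h3⟩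
      exact ⟨h1, rfl, fun y hy => (Option.some.inj hy) ▸ h3⟩
    · rintro ⟨h1, h2, h3⟩
      exact ⟨h1, by injection h2, h3 _ rfl⟩
  · simp only [rp, List.map_ofFn]

lemma ncNablaInv_eq (f : P → S) (v : P) :
    ncNablaInv f v
      = ∑ L ∈ (listFinset P).filter (fun L => L ≠ [] ∧ IsDownChain v L), rp f L := by
  rw [← sum_fin_eq_sum_list (IsDownChain v) (rp f)]
  unfold ncNablaInv
  refine Finset.sum_congr rfl fun k _ => ?_
  refine Finset.sum_congr ?_ fun c _ => ?_
  · ext c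
    simp only [Finset.mem_filter, Finset.mem_univ, true_and]
    unfold IsDownChain
    rw [← satChain_iff, head?_ofFn, getLast?_ofFn]
    constructor
    · rintro ⟨h1, h2, rfl⟩
      exact ⟨h1, fun y hy => (Option.some.inj hy) ▸ h2, rfl⟩
    · rintro ⟨h1, h2, h3⟩
      exact ⟨h1, h2 _ rfl, by injection h3⟩
  · simp only [rp, List.map_ofFn]

lemma tauDenom_eq (f : P → S) (v : P) :
    tauDenom f v
      = ∑ L ∈ (listFinset P).filter (fun L => L ≠ [] ∧ IsMaxChainL L), wtau f v L := by
  rw [← sum_fin_eq_sum_list IsMaxChainL (wtau f v)]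
  unfold tauDenom
  refine Finset.sum_congr rfl fun k _ => ?_
  refine Finset.sum_congr ?_ fun c _ => ?_
  · ext c
    simp only [Finset.mem_filter, Finset.mem_univ, true_and]
    unfold MaxChain IsMaxChainL
    rw [← satChain_iff, head?_ofFn, getLast?_ofFn]
    constructor
    · rintro ⟨h1, h2, h3⟩
      exact ⟨h1, fun y hy => (Option.some.inj hy) ▸ h2, fun y hy => (Option.some.inj hy) ▸ h3⟩
    · rintro ⟨h1, h2, h3⟩
      exact ⟨h1, h2 _ rfl, h3 _ rfl⟩
  · unfold wtau
    rw [Finset.sum_filter, Finset.sum_filter, List.length_ofFn,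
      ← Fin.sum_univ_eq_sum_range (fun j =>
        if (List.ofFn c)[j]? = some v then
          rp f ((List.ofFn c).take j) * rp f ((List.ofFn c).drop j) else 0) (k + 1)]
    refine Finset.sum_congr rfl fun j _ => ?_
    have hidx : (List.ofFn c)[(j : ℕ)]? = some v ↔ c j = v := by
      rw [List.getElem?_eq_getElem (by simp; exact Nat.lt_succ_iff.mp j.isLt)]
      simp only [List.getElem_ofFn, Option.some.injEq, Fin.eta]
    have hprod : ∀ m : ℕ,
        (((List.ofFn (f ∘ c)).take m).reverse).prod = rp f ((List.ofFn c).take m) ∧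
        (((List.ofFn (f ∘ c)).drop m).reverse).prod = rp f ((List.ofFn c).drop m) := by
      intro m
      constructor <;> simp only [rp, List.map_take, List.map_drop, List.map_ofFn]
    by_cases h : c j = v
    · rw [if_pos h, if_pos (hidx.mpr h), (hprod j.1).1, (hprod j.1).2]
    · rw [if_neg h, if_neg (fun hh => h (hidx.mp hh))]

end ListForms

section BelowChains

lemma isBelowChain_nil_iff (v : P) : IsBelowChain v ([] : List P) ↔ IsMin v := by
  unfold IsBelowChain; simp; exact fun _ => List.IsChain.nil

lemma lSum_ncNablaInv_eq (f : P → S) (v : P) :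
    lSum (ncNablaInv f) v
      = ∑ L ∈ (listFinset P).filter (fun L => IsBelowChain v L), rp f L := by
  rw [← Finset.sum_filter_add_sum_filter_not
      ((listFinset P).filter (fun L => IsBelowChain v L)) (fun L => L = []) (rp f)]
  have h1 : Finset.filter (fun L => L = [])
      ((listFinset P).filter (fun L => IsBelowChain v L))
      = if IsMin v then {([] : List P)} else ∅ := by
    ext M
    simp only [Finset.mem_filter, mem_listFinset]
    constructor
    · rintro ⟨⟨hlen, hbel⟩, rfl⟩
      rw [if_pos ((isBelowChain_nil_iff v).mp hbel)]
      simp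
    · intro hM
      by_cases hmin : IsMin v
      · rw [if_pos hmin] at hM
        obtain rfl : M = [] := by simpa using hM
        exact ⟨⟨by simp, (isBelowChain_nil_iff v).mpr hmin⟩, rfl⟩
      · rw [if_neg hmin] at hM; simp at hM
  have h2 : Finset.filter (fun L => ¬ L = [])
      ((listFinset P).filter (fun L => IsBelowChain v L))
      = (Finset.univ.filter (fun u => u ⋖ v)).biUnion
          (fun u => (listFinset P).filter (fun L => L ≠ [] ∧ IsDownChain u L)) := by
    ext M
    simp only [Finset.mem_filter, Finset.mem_biUnion, Finset.mem_univ, true_and]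
    constructor
    · rintro ⟨⟨hmem, hch, hhd, hbel⟩, hne⟩
      rcases hbel with ⟨rfl, -⟩ | ⟨u, hu, huv⟩
      · exact absurd rfl hne
      · exact ⟨u, huv, hmem, hne, hch, hhd, hu⟩
    · rintro ⟨u, huv, hmem, hne, hch, hhd, hu⟩
      exact ⟨⟨hmem, hch, hhd, Or.inr ⟨u, hu, huv⟩⟩, hne⟩
  have hdisj : (↑(Finset.univ.filter (fun u => u ⋖ v)) : Set P).PairwiseDisjoint
      (fun u => (listFinset P).filter (fun L => L ≠ [] ∧ IsDownChain u L)) := by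
    intro a _ b _ hab
    refine Finset.disjoint_left.mpr fun L hL1 hL2 => hab ?_
    simp only [Finset.mem_filter] at hL1 hL2
    exact Option.some.inj (hL1.2.2.2.2.symm.trans hL2.2.2.2.2)
  rw [h1, h2, Finset.sum_biUnion hdisj]
  have h3 : ∀ u ∈ Finset.univ.filter (fun u => u ⋖ v),
      ∑ L ∈ (listFinset P).filter (fun L => L ≠ [] ∧ IsDownChain u L), rp f L
        = ncNablaInv f u := fun u _ => (ncNablaInv_eq f u).symm
  rw [Finset.sum_congr rfl h3]
  unfold lSum
  congr 1
  split
  · simp [rp]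
  · simp

lemma downChain_decomp {L : List P} {v : P} (h : IsDownChain v L) :
    L.dropLast ++ [v] = L := by
  have hne : L ≠ [] := by rintro rfl; simp [IsDownChain] at h
  have hv : L.getLast hne = v := by
    have h2 := h.2.2; rw [List.getLast?_eq_getLast hne] at h2
    exact Option.some.inj h2
  rw [← hv]; exact List.dropLast_append_getLast hne

lemma downChain_dropLast {L : List P} {v : P} (h : IsDownChain v L) :
    IsBelowChain v L.dropLast := by
  have hd := downChain_decomp h
  refine ⟨?_, ?_, ?_⟩
  · have h1 := h.1; rw [← hd] at h1
    exact (List.isChain_append.mp h1).1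
  · intro y hy
    apply h.2.1
    rw [← hd, List.head?_append, hy]; rfl
  · rcases eq_or_ne L.dropLast [] with he | he
    · left
      refine ⟨he, ?_⟩
      have hLv : L = [v] := by rw [← hd, he]; rfl
      have := h.2.1 v (by rw [hLv]; rfl)
      exact this
    · right
      obtain ⟨u, hu⟩ : ∃ u, L.dropLast.getLast? = some u := by
        cases hL : L.dropLast with
        | nil => exact absurd hL he
        | cons a t => exact ⟨(a :: t).getLast (by simp), List.getLast?_eq_getLast _⟩
      refine ⟨u, hu, ?_⟩
      have h1 := h.1; rw [← hd] at h1
      exact (List.isChain_append.mp h1).2.2 u hu v rfl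

lemma belowChain_append {M : List P} {v : P} (h : IsBelowChain v M) :
    IsDownChain v (M ++ [v]) := by
  obtain ⟨hch, hhd, hlast⟩ := h
  refine ⟨?_, ?_, List.getLast?_concat (l := M)⟩
  · refine List.isChain_append.mpr ?_
    refine ⟨hch, List.isChain_singleton v, ?_⟩
    intro x hx y hy
    obtain rfl : v = y := by simpa using hy
    rcases hlast with ⟨rfl, -⟩ | ⟨u, hu, huv⟩
    · simp at hx
    · rw [hu] at hx
      obtain rfl : u = x := by simpa using hx
      exact huv
  · intro y hy
    rcases eq_or_ne M [] with rfl | hne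
    · simp only [List.nil_append] at hy
      obtain rfl : v = y := by simpa using hy
      rcases hlast with ⟨-, hmin⟩ | ⟨u, hu, -⟩
      · exact hmin
      · simp at hu
    · rw [List.head?_append] at hy
      cases hM : M.head? with
      | none => exact absurd (List.head?_eq_none_iff.mp hM) hne
      | some a =>
        rw [hM] at hy
        obtain rfl : a = y := by simpa using hy
        exact hhd _ hM

lemma rp_concat (f : P → S) (M : List P) (v : P) :
    rp f (M ++ [v]) = f v * rp f M := by
  simp [rp]

lemma ncNablaInv_rec (f : P → S) (v : P) :
    ncNablaInv f v = f v * lSum (ncNablaInv f) v := by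
  rw [ncNablaInv_eq, lSum_ncNablaInv_eq, Finset.mul_sum]
  refine Finset.sum_nbij' (fun L => L.dropLast) (fun M => M ++ [v]) ?_ ?_ ?_ ?_ ?_
  · intro L hL
    simp only [Finset.mem_filter] at hL ⊢
    refine ⟨mem_listFinset.mpr ?_, downChain_dropLast hL.2.2⟩
    have h1 : L.dropLast.length ≤ L.length := by
      rw [List.length_dropLast]; omega
    exact le_trans h1 (mem_listFinset.mp hL.1)
  · intro M hM
    simp only [Finset.mem_filter] at hM ⊢
    have hdown := belowChain_append hM.2
    exact ⟨mem_listFinset_of_chain hdown.1, by simp, hdown⟩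
  · intro L hL
    simp only [Finset.mem_filter] at hL
    exact downChain_decomp hL.2.2
  · intro M _
    exact List.dropLast_concat
  · intro L hL
    simp only [Finset.mem_filter] at hL
    conv_lhs => rw [← downChain_decomp hL.2.2]
    rw [rp_concat]

end BelowChains

section Split

lemma head?_take' {L : List P} {j : ℕ} (hj : j ≠ 0) : (L.take j).head? = L.head? := by
  cases L <;> cases j <;> simp_all

lemma getLast?_take' {L : List P} {j : ℕ} (h0 : 0 < j) (hj : j ≤ L.length) :
    (L.take j).getLast? = L[j - 1]? := by
  rw [List.getLast?_eq_getElem?, List.length_take, min_eq_left hj, List.getElem?_take,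
    if_pos (by omega)]

lemma getLast?_drop' {L : List P} {j : ℕ} (hj : j < L.length) :
    (L.drop j).getLast? = L.getLast? := by
  rw [List.getLast?_eq_getElem?, List.getLast?_eq_getElem?, List.length_drop,
    List.getElem?_drop]
  congr 1
  omega

lemma chain_cov {L : List P} (h : List.Chain' (· ⋖ ·) L) {i : ℕ} (hi : i + 1 < L.length) :
    L[i] ⋖ L[i + 1] := by
  have := List.isChain_iff_getElem.mp h i (by omega)
  simpa using this

lemma tauDenom_split (f : P → S) (v : P) :
    tauDenom f v = lSum (ncNablaInv f) v * ncDeltaInv f v := by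
  rw [tauDenom_eq, lSum_ncNablaInv_eq, ncDeltaInv_eq, Finset.sum_mul_sum,
    ← Finset.sum_product']
  simp only [wtau]
  rw [Finset.sum_sigma']
  refine Finset.sum_nbij' (fun x => (x.1.take x.2, x.1.drop x.2))
      (fun p => ⟨p.1 ++ p.2, p.1.length⟩) ?_ ?_ ?_ ?_ ?_
  · rintro ⟨L, j⟩ hx
    rw [Finset.mem_sigma] at hx
    obtain ⟨hL, hj⟩ := hx
    simp only [Finset.mem_filter, Finset.mem_range] at hL hj
    obtain ⟨-, -, hch, hhd, hlst⟩ := hL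
    obtain ⟨hjlen, hjv⟩ := hj
    have hjv' : L[j] = v := by
      rw [List.getElem?_eq_getElem hjlen] at hjv
      exact Option.some.inj hjv
    rw [Finset.mem_product]
    constructor
    · simp only [Finset.mem_filter]
      refine ⟨mem_listFinset_of_chain (hch.take j), hch.take j, ?_, ?_⟩
      · intro y hy
        rcases Nat.eq_zero_or_pos j with rfl | hpos
        · simp at hy
        · rw [head?_take' (by omega)] at hy
          exact hhd y hy
      · rcases Nat.eq_zero_or_pos j with rfl | hpos
        · left
          refine ⟨List.take_zero (l := L), ?_⟩
          apply hhd v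
          rw [List.head?_eq_getElem?, List.getElem?_eq_getElem hjlen, hjv']
        · right
          have hj1 : j - 1 < L.length := by omega
          refine ⟨L[j - 1], ?_, ?_⟩
          · rw [getLast?_take' hpos (le_of_lt hjlen), List.getElem?_eq_getElem hj1]
          · have hcov := chain_cov hch (i := j - 1) (by omega)
            simp only [show j - 1 + 1 = j from by omega] at hcov
            rw [hjv'] at hcov
            exact hcov
    · simp only [Finset.mem_filter]
      have hne : L.drop j ≠ [] := by
        intro h
        rw [List.drop_eq_nil_iff] at h
        omega
      refine ⟨mem_listFinset_of_chain (hch.drop j), hne, hch.drop j, ?_, ?_⟩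
      · rw [List.head?_drop]; exact hjv
      · intro y hy
        rw [getLast?_drop' hjlen] at hy
        exact hlst y hy
  · rintro ⟨M, L₂⟩ hp
    rw [Finset.mem_product] at hp
    obtain ⟨hM, hL₂⟩ := hp
    simp only [Finset.mem_filter] at hM hL₂
    obtain ⟨-, hMch, hMhd, hMlst⟩ := hM
    obtain ⟨-, hL₂ne, hL₂ch, hL₂hd, hL₂lst⟩ := hL₂
    have hch : List.Chain' (· ⋖ ·) (M ++ L₂) := by
      refine List.isChain_append.mpr ?_
      refine ⟨hMch, hL₂ch, ?_⟩
      intro x hx y hy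
      rw [hL₂hd] at hy
      obtain rfl : v = y := by simpa using hy
      rcases hMlst with ⟨rfl, -⟩ | ⟨u, hu, huv⟩
      · simp at hx
      · rw [hu] at hx
        obtain rfl : u = x := by simpa using hx
        exact huv
    rw [Finset.mem_sigma]
    constructor
    · simp only [Finset.mem_filter]
      refine ⟨mem_listFinset_of_chain hch, by simp [hL₂ne], hch, ?_, ?_⟩
      · intro y hy
        rw [List.head?_append] at hy
        cases hMh : M.head? with
        | none =>
          have : M = [] := List.head?_eq_none_iff.mp hMh
          subst this
          simp only [List.head?_nil, Option.none_or, hL₂hd] at hy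
          obtain rfl : v = y := by simpa using hy
          rcases hMlst with ⟨-, hmin⟩ | ⟨u, hu, -⟩
          · exact hmin
          · simp at hu
        | some a =>
          rw [hMh] at hy
          obtain rfl : a = y := by simpa using hy
          exact hMhd _ hMh
      · intro y hy
        rw [List.getLast?_append, List.getLast?_eq_getLast hL₂ne] at hy
        obtain rfl : L₂.getLast hL₂ne = y := by simpa using hy
        exact hL₂lst _ (List.getLast?_eq_getLast hL₂ne)
    · simp only [Finset.mem_filter, Finset.mem_range, List.length_append]
      have hpos : 0 < L₂.length := List.length_pos_iff.mpr hL₂ne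
      refine ⟨by omega, ?_⟩
      rw [List.getElem?_append_right le_rfl, Nat.sub_self, ← List.head?_eq_getElem?]
      exact hL₂hd
  · rintro ⟨L, j⟩ hx
    rw [Finset.mem_sigma] at hx
    obtain ⟨-, hj⟩ := hx
    simp only [Finset.mem_filter, Finset.mem_range] at hj
    have h2 : (L.take j).length = j := by
      rw [List.length_take]; omega
    simp only [h2, List.take_append_drop]
  · rintro ⟨M, L₂⟩ _
    simp only [List.take_left, List.drop_left]
  · rintro ⟨L, j⟩ _
    rfl

end Split

section Locality

lemma ncDeltaInv_congr {f h : P → S} (v : P) (hfh : ∀ x, v ≤ x → f x = h x) :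
    ncDeltaInv f v = ncDeltaInv h v := by
  rw [ncDeltaInv_eq, ncDeltaInv_eq]
  refine Finset.sum_congr rfl fun L hL => ?_
  simp only [Finset.mem_filter] at hL
  obtain ⟨-, -, hch, hhd, -⟩ := hL
  exact rp_congr fun x hx => hfh x (head_le_of_chain hch hhd hx)

lemma ncNablaInv_congr {f h : P → S} (v : P) (hfh : ∀ x, x ≤ v → f x = h x) :
    ncNablaInv f v = ncNablaInv h v := by
  rw [ncNablaInv_eq, ncNablaInv_eq]
  refine Finset.sum_congr rfl fun L hL => ?_
  simp only [Finset.mem_filter] at hL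
  obtain ⟨-, -, hch, -, hlst⟩ := hL
  exact rp_congr fun x hx => hfh x (le_getLast_of_chain hch hlst hx)

end Locality

end JR

/-- For any linear extension `(x₁,…,xₙ)` of `P`, noncommutative
antichain rowmotion `NAR = τ_{xₙ} ∘ ⋯ ∘ τ_{x₂} ∘ τ_{x₁}` (with `τ_{x₁}` applied first)
equals the composition `∇ ∘ Θ ∘ Δ⁻¹` of the noncommutative transfer maps, on every
`S`-labeling for which both sides are defined. -/
theorem NAR_eq_nabla_theta_deltaInv (C : S) (hC : ∀ s : S, C * s = s * C)
    (l : List P) (hl : IsLinearExtension l) (g : P → S)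
    (hdefL : ncTausDef C l g)
    (hdefTheta : ∀ x : P, ncDeltaInv g x ≠ 0)
    (hdefNabla : ∀ x : P, lSum (ncTheta C (ncDeltaInv g)) x ≠ 0) :
    applyNCTaus C l g = ncNabla (ncTheta C (ncDeltaInv g)) := by
  classical
  haveI : WellFoundedLT P := Finite.to_wellFoundedLT
  set T : P → S := ncNabla (ncTheta C (ncDeltaInv g)) with hT
  have claimA : ∀ v : P, ncNablaInv T v = ncTheta C (ncDeltaInv g) v := by
    intro v
    induction v using WellFoundedLT.induction with
    | _ v IH =>
      rw [JR.ncNablaInv_rec]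
      have hM : lSum (ncNablaInv T) v = lSum (ncTheta C (ncDeltaInv g)) v := by
        unfold lSum
        congr 1
        refine Finset.sum_congr rfl fun u hu => ?_
        exact IH u (Finset.mem_filter.mp hu).2.lt
      rw [hM, hT]
      show ncNabla (ncTheta C (ncDeltaInv g)) v * _ = _
      unfold ncNabla
      rw [mul_assoc, inv_mul_cancel₀ (hdefNabla v), mul_one]
  have aux : ∀ (suf : List P) (h : P → S),
      suf.Nodup →
      suf.Pairwise (fun a b => ¬ b < a) →
      (∀ x ∈ suf, ∀ y, x ≤ y → y ∈ suf) →
      (∀ x, (∃ y ∈ suf, y ≤ x) → h x = g x) →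
      (∀ x, (∀ y ∈ suf, ¬ y ≤ x) → h x = T x) →
      applyNCTaus C suf h = T := by
    intro suf
    induction suf with
    | nil =>
      intro h _ _ _ _ h5
      funext x
      exact h5 x (by simp)
    | cons v suf' IH =>
      intro h hnd hpw hup h4 h5
      have hndd := List.nodup_cons.mp hnd
      have hpv : ∀ z ∈ suf', ¬ z < v := (List.pairwise_cons.mp hpw).1
      have hhg : ∀ x, v ≤ x → h x = g x :=
        fun x hx => h4 x ⟨v, List.mem_cons_self (a := v) (l := suf'), hx⟩
      have hFv : ncDeltaInv h v = ncDeltaInv g v := JR.ncDeltaInv_congr v hhg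
      have hMv : lSum (ncNablaInv h) v = lSum (ncTheta C (ncDeltaInv g)) v := by
        unfold lSum
        congr 1
        refine Finset.sum_congr rfl fun u hu => ?_
        have huv : u ⋖ v := (Finset.mem_filter.mp hu).2
        have hTu : ∀ y, y ≤ u → h y = T y := by
          intro y hy
          apply h5
          intro z hz hzy
          rcases List.mem_cons.mp hz with rfl | hz'
          · exact absurd (lt_of_le_of_lt (hzy.trans hy) huv.lt) (lt_irrefl z)
          · exact hpv z hz' (lt_of_le_of_lt (hzy.trans hy) huv.lt)
        rw [JR.ncNablaInv_congr u hTu, claimA u]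
      have hstep : ncTau C v h v = T v := by
        have h0 : ncTau C v h v = C * (tauDenom h v)⁻¹ := by simp [ncTau]
        rw [h0, JR.tauDenom_split, hFv, hMv, mul_inv_rev, ← mul_assoc, hT]
        rfl
      show applyNCTaus C suf' (ncTau C v h) = T
      apply IH (ncTau C v h) hndd.2 (List.pairwise_cons.mp hpw).2
      · intro x hx y hxy
        have hy : y ∈ v :: suf' := hup x (List.mem_cons_of_mem v hx) y hxy
        rcases List.mem_cons.mp hy with rfl | hy'
        · rcases eq_or_lt_of_le hxy with rfl | hlt
          · exact absurd hx hndd.1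
          · exact absurd hlt (hpv x hx)
        · exact hy'
      · intro x hx
        obtain ⟨y, hy, hyx⟩ := hx
        have hxv : x ≠ v := by
          rintro rfl
          rcases eq_or_lt_of_le hyx with rfl | hlt
          · exact hndd.1 hy
          · exact hpv y hy hlt
        have h1 : ncTau C v h x = h x := by simp [ncTau, hxv]
        rw [h1]
        exact h4 x ⟨y, List.mem_cons_of_mem v hy, hyx⟩
      · intro x hx
        by_cases hxv : x = v
        · subst hxv; exact hstep
        · have h1 : ncTau C v h x = h x := by simp [ncTau, hxv]
          rw [h1]
          apply h5
          intro z hz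
          rcases List.mem_cons.mp hz with rfl | hz'
          · intro hzx
            have hxmem : x ∈ z :: suf' := hup z (List.mem_cons_self (a := z) (l := suf')) x hzx
            rcases List.mem_cons.mp hxmem with rfl | hx'
            · exact hxv rfl
            · exact absurd le_rfl (hx x hx')
          · exact hx z hz'
  have hpl : l.Pairwise (fun a b => ¬ b < a) := by
    rw [List.pairwise_iff_getElem]
    intro i j hi hj hij hlt
    have := hl.2.2 j i hj hi hlt
    omega
  refine aux l g hl.1 hpl (fun x _ y _ => hl.2.1 y) (fun x _ => rfl) ?_
  intro x hx
  exact absurd le_rfl (hx x (hl.2.1 x))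
end
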